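/- Let U ⊆ ℂ be open, let F, G : U → ℂ be holomorphic, and define x(u+iv) = (Re h₁, −Im h₁, Re h₃) where h₁' = F and h₃' = −F·G (Weierstrass data φ = (F, iF, −FG)). Then at every z₀ ∈ U with F(z₀) ≠ 0, the minimal normal N_m = (n₁, n₂, 1) satisfies n₁ + i n₂ = G(z₀); that is, the top-view projection of the minimal normal, identified with a complex number, equals the holomorphic function G. -/

import Mathlib

noncomputable section

/-- Partial derivative of a map on ℂ ≅ ℝ² in the u-direction (real direction 1). -/
def du {E : Type*} [NormedAddCommGroup E] [NormedSpace ℝ E]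
    (f : ℂ → E) : ℂ → E := fun z => fderiv ℝ f z 1

/-- Partial derivative of a map on ℂ ≅ ℝ² in the v-direction (direction i). -/
def dv {E : Type*} [NormedAddCommGroup E] [NormedSpace ℝ E]
    (f : ℂ → E) : ℂ → E := fun z => fderiv ℝ f z Complex.I

/-- The degenerate simply isotropic inner product on ℝ³: ⟨u,v⟩ = u₁v₁ + u₂v₂. -/
def isoInner (a b : ℝ × ℝ × ℝ) : ℝ := a.1 * b.1 + a.2.1 * b.2.1

/-- The Euclidean dot product on ℝ³. -/
def dot3 (a b : ℝ × ℝ × ℝ) : ℝ := a.1 * b.1 + a.2.1 * b.2.1 + a.2.2 * b.2.2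

/-- The Euclidean cross product on ℝ³. -/
def cross3 (a b : ℝ × ℝ × ℝ) : ℝ × ℝ × ℝ :=
  (a.2.1 * b.2.2 - a.2.2 * b.2.1, a.2.2 * b.1 - a.1 * b.2.2, a.1 * b.2.1 - a.2.1 * b.1)

/-- First fundamental form coefficients (isotropic metric) of x : ℂ → ℝ³. -/
def g11 (x : ℂ → ℝ × ℝ × ℝ) (z : ℂ) : ℝ := isoInner (du x z) (du x z)
def g12 (x : ℂ → ℝ × ℝ × ℝ) (z : ℂ) : ℝ := isoInner (du x z) (dv x z)
def g22 (x : ℂ → ℝ × ℝ × ℝ) (z : ℂ) : ℝ := isoInner (dv x z) (dv x z)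

/-- The minimal normal: the unique vector of the form (n₁,n₂,1) Euclidean-orthogonal to
x_u and x_v (obtained by normalizing the cross product so its third component is 1). -/
def Nm (x : ℂ → ℝ × ℝ × ℝ) (z : ℂ) : ℝ × ℝ × ℝ :=
  ((cross3 (du x z) (dv x z)).1 / (cross3 (du x z) (dv x z)).2.2,
   (cross3 (du x z) (dv x z)).2.1 / (cross3 (du x z) (dv x z)).2.2, 1)

/-- Second fundamental form coefficients with respect to the minimal normal. -/
def h11 (x : ℂ → ℝ × ℝ × ℝ) (z : ℂ) : ℝ := dot3 (du (du x) z) (Nm x z)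
def h12 (x : ℂ → ℝ × ℝ × ℝ) (z : ℂ) : ℝ := dot3 (du (dv x) z) (Nm x z)
def h22 (x : ℂ → ℝ × ℝ × ℝ) (z : ℂ) : ℝ := dot3 (dv (dv x) z) (Nm x z)

/-- The isotropic Gaussian curvature. -/
def Kcurv (x : ℂ → ℝ × ℝ × ℝ) (z : ℂ) : ℝ :=
  (h11 x z * h22 x z - (h12 x z) ^ 2) / (g11 x z * g22 x z - (g12 x z) ^ 2)

/-- The isotropic mean curvature. -/
def meanH (x : ℂ → ℝ × ℝ × ℝ) (z : ℂ) : ℝ :=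
  (g11 x z * h22 x z - 2 * g12 x z * h12 x z + g22 x z * h11 x z) /
    (2 * (g11 x z * g22 x z - (g12 x z) ^ 2))

/-- For the Weierstrass data φ = (F, iF, −FG) (i.e. x = (Re h₁, −Im h₁, Re h₃) with
h₁' = F, h₃' = −F·G), at every z₀ with F(z₀) ≠ 0 the top-view projection of the minimal
normal N_m = (n₁,n₂,1), identified with the complex number n₁ + i n₂, equals G(z₀). -/
theorem stmt13 (U : Set ℂ) (hU : IsOpen U) (F G h₁ h₃ : ℂ → ℂ)
    (hF : DifferentiableOn ℂ F U) (hG : DifferentiableOn ℂ G U)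
    (hh₁ : ∀ z ∈ U, HasDerivAt h₁ (F z) z)
    (hh₃ : ∀ z ∈ U, HasDerivAt h₃ (-(F z * G z)) z) :
    ∀ z₀ ∈ U, F z₀ ≠ 0 →
      ((Nm (fun w => ((h₁ w).re, -(h₁ w).im, (h₃ w).re)) z₀).1 : ℂ) +
        ((Nm (fun w => ((h₁ w).re, -(h₁ w).im, (h₃ w).re)) z₀).2.1 : ℂ) * Complex.I =
        G z₀ := by
  intro z₀ hz hFz
  have H1 : HasFDerivAt h₁ ((ContinuousLinearMap.smulRight (1 : ℂ →L[ℂ] ℂ) (F z₀)).restrictScalars ℝ) z₀ :=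
    ((hh₁ z₀ hz).hasFDerivAt).restrictScalars ℝ
  have H3 : HasFDerivAt h₃ ((ContinuousLinearMap.smulRight (1 : ℂ →L[ℂ] ℂ) (-(F z₀ * G z₀))).restrictScalars ℝ) z₀ :=
    ((hh₃ z₀ hz).hasFDerivAt).restrictScalars ℝ
  have Hre1 : HasFDerivAt (fun w => (h₁ w).re)
      (Complex.reCLM.comp ((ContinuousLinearMap.smulRight (1 : ℂ →L[ℂ] ℂ) (F z₀)).restrictScalars ℝ)) z₀ :=
    (Complex.reCLM.hasFDerivAt).comp z₀ H1
  have Him1 : HasFDerivAt (fun w => -(h₁ w).im)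
      (-(Complex.imCLM.comp ((ContinuousLinearMap.smulRight (1 : ℂ →L[ℂ] ℂ) (F z₀)).restrictScalars ℝ))) z₀ :=
    ((Complex.imCLM.hasFDerivAt).comp z₀ H1).neg
  have Hre3 : HasFDerivAt (fun w => (h₃ w).re)
      (Complex.reCLM.comp ((ContinuousLinearMap.smulRight (1 : ℂ →L[ℂ] ℂ) (-(F z₀ * G z₀))).restrictScalars ℝ)) z₀ :=
    (Complex.reCLM.hasFDerivAt).comp z₀ H3
  have Hx : HasFDerivAt (fun w => ((h₁ w).re, -(h₁ w).im, (h₃ w).re))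
      ((Complex.reCLM.comp ((ContinuousLinearMap.smulRight (1 : ℂ →L[ℂ] ℂ) (F z₀)).restrictScalars ℝ)).prod
        ((-(Complex.imCLM.comp ((ContinuousLinearMap.smulRight (1 : ℂ →L[ℂ] ℂ) (F z₀)).restrictScalars ℝ))).prod
          (Complex.reCLM.comp ((ContinuousLinearMap.smulRight (1 : ℂ →L[ℂ] ℂ) (-(F z₀ * G z₀))).restrictScalars ℝ)))) z₀ :=
    Hre1.prodMk (Him1.prodMk Hre3)
  set a := (F z₀).re with ha
  set b := (F z₀).im with hb
  set p := (-(F z₀ * G z₀)).re with hp0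
  set q := (-(F z₀ * G z₀)).im with hq0
  have hdu : du (fun w => ((h₁ w).re, -(h₁ w).im, (h₃ w).re)) z₀ = (a, -b, p) := by
    simp [du, Hx.fderiv]
    simp [hp0, Complex.mul_re]
    exact ⟨rfl, rfl⟩
  have hdv : dv (fun w => ((h₁ w).re, -(h₁ w).im, (h₃ w).re)) z₀ = (-b, -a, -q) := by
    simp [dv, Hx.fderiv, smul_eq_mul, Complex.mul_re, Complex.mul_im]
    simp [hq0, Complex.mul_im]
    exact ⟨rfl, rfl⟩
  have hab : a ^ 2 + b ^ 2 ≠ 0 := by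
    have h := Complex.normSq_pos.mpr hFz
    rw [Complex.normSq_apply] at h
    nlinarith
  have hden : a * (-a) - (-b) * (-b) ≠ 0 := by
    intro h; apply hab; nlinarith
  have hp : p = -(a * (G z₀).re - b * (G z₀).im) := by
    rw [hp0]; simp [Complex.mul_re]
    rfl
  have hq : q = -(a * (G z₀).im + b * (G z₀).re) := by
    rw [hq0]; simp [Complex.mul_im]
    rfl
  have hNm : Nm (fun w => ((h₁ w).re, -(h₁ w).im, (h₃ w).re)) z₀ =
      ((G z₀).re, (G z₀).im, 1) := by
    simp only [Nm, cross3, hdu, hdv]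
    refine Prod.ext ?_ (Prod.ext ?_ rfl)
    · show (-b * -q - p * -a) / (a * -a - -b * -b) = (G z₀).re
      rw [div_eq_iff hden, hp, hq]; ring
    · show (p * -b - a * -q) / (a * -a - -b * -b) = (G z₀).im
      rw [div_eq_iff hden, hp, hq]; ring
  rw [hNm]
  simp [Complex.ext_iff]
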